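/- Railroad-switch gadget correctness: the sequence of three transitions — (i) conditioned on control qubit q₁, route to upper track applying identity, or lower track; (ii) apply σ^x to target q₂ only on the upper track; (iii) merge tracks — maps the state (a|0⟩_{q₁}|α⟩ + b|1⟩_{q₁}|β⟩) ⊗ |t−1⟩_c to (a|0⟩_{q₁}|α⟩ + b|1⟩_{q₁}(σ^x|β⟩)) ⊗ |t⟩_c, i.e., the composite effect on the work register is exactly CNOT_{q₁→q₂}. Formally: in the 4-dimensional clock space spanned by |c_{t−1}⟩, |track⟩, |track'⟩, |c_t⟩, the unitary following the three allowed transitions equals CNOT ⊗ |c_t⟩⟨c_{t−1}| on states starting in clock |c_{t−1}⟩. -/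

import Mathlib

open Matrix Kronecker

/-- Railroad-switch gadget correctness: with clock basis
`0 = c_{t−1}, 1 = u₁, 2 = u₂, 3 = l₁, 4 = l₂, 5 = c_t`, the composition of the three
transition steps (conditional routing, conditional bit-flip of the target on the upper
track, merging of the tracks) equals `CNOT_{q₁,q₂} ⊗ |c_t⟩⟨c_{t−1}|`. -/
theorem stmt_16
    (P0 P1 σx : Matrix (Fin 2) (Fin 2) ℂ)
    (hP0 : P0 = Matrix.single 0 0 1)
    (hP1 : P1 = Matrix.single 1 1 1)
    (hσx : σx = !![0, 1; 1, 0])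
    (E : Fin 6 → Fin 6 → Matrix (Fin 6) (Fin 6) ℂ)
    (hE : ∀ i j, E i j = Matrix.single i j 1)
    (CNOT : Matrix (Fin 2 × Fin 2) (Fin 2 × Fin 2) ℂ)
    (hCNOT : ∀ p q : Fin 2 × Fin 2,
      CNOT p q = if p.1 = q.1 ∧ p.2 = (if q.1 = 1 then q.2 + 1 else q.2) then 1 else 0)
    (T1 T2 T3 : Matrix ((Fin 2 × Fin 2) × Fin 6) ((Fin 2 × Fin 2) × Fin 6) ℂ)
    (hT1 : T1 = (P1 ⊗ₖ (1 : Matrix (Fin 2) (Fin 2) ℂ)) ⊗ₖ E 1 0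
              + (P0 ⊗ₖ (1 : Matrix (Fin 2) (Fin 2) ℂ)) ⊗ₖ E 3 0)
    (hT2 : T2 = ((1 : Matrix (Fin 2) (Fin 2) ℂ) ⊗ₖ σx) ⊗ₖ E 2 1
              + ((1 : Matrix (Fin 2) (Fin 2) ℂ) ⊗ₖ (1 : Matrix (Fin 2) (Fin 2) ℂ)) ⊗ₖ E 4 3)
    (hT3 : T3 = (P1 ⊗ₖ (1 : Matrix (Fin 2) (Fin 2) ℂ)) ⊗ₖ E 5 2
              + (P0 ⊗ₖ (1 : Matrix (Fin 2) (Fin 2) ℂ)) ⊗ₖ E 5 4) :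
    T3 * T2 * T1 = CNOT ⊗ₖ E 5 0 := by
  have hCN : CNOT = P1 ⊗ₖ σx + P0 ⊗ₖ (1 : Matrix (Fin 2) (Fin 2) ℂ) := by
    ext ⟨a,b⟩ ⟨d,e⟩
    simp only [hCNOT, hP0, hP1, hσx, Matrix.add_apply, Matrix.kroneckerMap_apply]
    fin_cases a <;> fin_cases b <;> fin_cases d <;> fin_cases e <;>
      simp [Matrix.single, Matrix.one_apply]
  subst hT1 hT2 hT3
  simp only [hE, hCN, add_mul, mul_add, ← Matrix.mul_kronecker_mul,
    Matrix.single_mul_single_same, Matrix.single_mul_single_of_ne,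
    mul_one, one_mul, Matrix.kroneckerMap_zero_right, Matrix.zero_kronecker,
    Matrix.kronecker_zero, add_zero, zero_add,
    (by decide : (1:Fin 6) ≠ 3), (by decide : (3:Fin 6) ≠ 1),
    (by decide : (2:Fin 6) ≠ 4), (by decide : (4:Fin 6) ≠ 2),
    (by decide : (2:Fin 6) ≠ 3), (by decide : (4:Fin 6) ≠ 1), hP0, hP1]
  simp [Matrix.single_mul_single_same, Matrix.single_mul_single_of_ne,
    Matrix.add_kronecker]
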